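/- Consider the principal-agent model with a risk-neutral agent under limited liability. A utility profile (x,y) ∈ F is implementable if and only if x ≥ max{0, w_1} and y ≥ 0, where w_1 = r_1 − c_1. -/

import Mathlib

open Finset

/-- Expected transfer at action `a` (zero for the default action `0`). -/
noncomputable def expT {n k : ℕ} (I : Fin (n + 1) → Fin k → ℝ) (t : Fin k → ℝ)
    (a : Fin (n + 1)) : ℝ :=
  if a = 0 then 0 else ∑ j, I a j * t j

/-- Risk-neutral agent's utility at action `a`. -/
noncomputable def uA {n k : ℕ} (c : Fin (n + 1) → ℝ) (I : Fin (n + 1) → Fin k → ℝ)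
    (t : Fin k → ℝ) (a : Fin (n + 1)) : ℝ :=
  expT I t a - c a

/-- Principal's utility at action `a`. -/
noncomputable def uP {n k : ℕ} (r : Fin (n + 1) → ℝ) (I : Fin (n + 1) → Fin k → ℝ)
    (t : Fin k → ℝ) (a : Fin (n + 1)) : ℝ :=
  r a - expT I t a

/-- `I` is an information structure: each non-default row is a distribution over signals. -/
def Stochastic {n k : ℕ} (I : Fin (n + 1) → Fin k → ℝ) : Prop :=
  ∀ a : Fin (n + 1), a ≠ 0 → (∀ j, 0 ≤ I a j) ∧ ∑ j, I a j = 1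

/-- `a` is an equilibrium action for the contract `t`: it maximizes the agent's utility
and, among the agent's optimal actions, maximizes the principal's utility
(ties are broken in the principal's favor). -/
def IsEquilibrium {n k : ℕ} (r c : Fin (n + 1) → ℝ) (I : Fin (n + 1) → Fin k → ℝ)
    (t : Fin k → ℝ) (a : Fin (n + 1)) : Prop :=
  (∀ b, uA c I t b ≤ uA c I t a) ∧
    ∀ b, uA c I t b = uA c I t a → uP r I t b ≤ uP r I t a

/-- `t` is an optimal limited-liability contract for `I`, with equilibrium action `a`:
its equilibrium principal's utility is at least that of any other limited-liability
contract. -/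
def OptimalAt {n k : ℕ} (r c : Fin (n + 1) → ℝ) (I : Fin (n + 1) → Fin k → ℝ)
    (t : Fin k → ℝ) (a : Fin (n + 1)) : Prop :=
  (∀ j, 0 ≤ t j) ∧ IsEquilibrium r c I t a ∧
    ∀ (t' : Fin k → ℝ) (a' : Fin (n + 1)), (∀ j, 0 ≤ t' j) →
      IsEquilibrium r c I t' a' → uP r I t' a' ≤ uP r I t a

/-- The utility profile `(x, y)` is implementable by some information structure
together with an optimal contract for it. -/
def ImplementsProfile {n : ℕ} (r c : Fin (n + 1) → ℝ) (x y : ℝ) : Prop :=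
  ∃ (k : ℕ) (_ : 0 < k) (I : Fin (n + 1) → Fin k → ℝ) (t : Fin k → ℝ) (a : Fin (n + 1)),
    Stochastic I ∧ OptimalAt r c I t a ∧ uP r I t a = x ∧ uA c I t a = y

/-- The action `a` is implementable. -/
def ImplementsAction {n : ℕ} (r c : Fin (n + 1) → ℝ) (a : Fin (n + 1)) : Prop :=
  ∃ (k : ℕ) (_ : 0 < k) (I : Fin (n + 1) → Fin k → ℝ) (t : Fin k → ℝ),
    Stochastic I ∧ OptimalAt r c I t a

/-- The action-transfer pair `(a, s)` is implementable. -/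
def ImplementsPair {n : ℕ} (r c : Fin (n + 1) → ℝ) (a : Fin (n + 1)) (s : ℝ) : Prop :=
  ∃ (k : ℕ) (_ : 0 < k) (I : Fin (n + 1) → Fin k → ℝ) (t : Fin k → ℝ),
    Stochastic I ∧ OptimalAt r c I t a ∧ expT I t a = s

/-- In the principal-agent model with a risk-neutral agent under limited
liability, a utility profile $(x,y) \in F$ is implementable if and only if
$x \ge \max\{0, w_1\}$ and $y \ge 0$, where $w_1 = r_1 - c_1$. -/
theorem implementable_profile_iff_risk_neutral
    (n : ℕ) (hn : 1 ≤ n) (r c : Fin (n + 1) → ℝ)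
    (hr0 : r 0 = 0) (hc0 : c 0 = 0)
    (hr_nonneg : ∀ a, 0 ≤ r a)
    (hc_pos : ∀ a : Fin (n + 1), a ≠ 0 → 0 < c a)
    (hc1_min : ∀ a : Fin (n + 1), a ≠ 0 → c 1 ≤ c a)
    (hr1_max : ∀ a : Fin (n + 1), a ≠ 0 → c a = c 1 → r a ≤ r 1)
    (x y : ℝ)
    (hF : (∃ i : Fin (n + 1), i ≠ 0 ∧ ∃ s : ℝ, 0 ≤ s ∧ x = r i - s ∧ y = s - c i) ∨
      (x = 0 ∧ y = 0)) :
    ImplementsProfile r c x y ↔ max 0 (r 1 - c 1) ≤ x ∧ 0 ≤ y := by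
  have h1 : (1 : Fin (n + 1)) ≠ 0 := by
    have h' : ((1 : Fin (n + 1)) : ℕ) = 1 % (n + 1) := Fin.val_one' n.succ
    intro h
    rw [h] at h'
    simp at h'
    omega
  constructor
  · rintro ⟨k, hk, I, t, a, hI, ⟨htnn, ⟨heq1, heq2⟩, hopt⟩, hx, hy⟩
    have hzero : IsEquilibrium r c I (fun _ => (0:ℝ)) 0 := by
      have hA : ∀ b, uA c I (fun _ => (0:ℝ)) b = -(c b) := by
        intro b
        by_cases hb : b = 0 <;> simp [uA, expT, hb, hc0]
      constructor
      · intro b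
        rw [hA b, hA 0, hc0]
        by_cases hb : b = 0
        · simp [hb, hc0]
        · have := hc_pos b hb; linarith
      · intro b hb
        rw [hA b, hA 0, hc0] at hb
        by_cases hb0 : b = 0
        · simp [hb0]
        · have := hc_pos b hb0; linarith
    constructor
    · rw [max_le_iff]
      constructor
      · rw [← hx]
        have := hopt (fun _ => 0) 0 (fun _ => le_refl 0) hzero
        have h0 : uP r I (fun _ => (0:ℝ)) 0 = 0 := by simp [uP, expT, hr0]
        linarith
      · -- w1 ≤ x via constant contract c 1
        set t' : Fin k → ℝ := fun _ => c 1 with ht'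
        have hc1pos : 0 < c 1 := hc_pos 1 h1
        have hexp : ∀ b : Fin (n+1), b ≠ 0 → expT I t' b = c 1 := by
          intro b hb
          unfold expT
          rw [if_neg hb, ← Finset.sum_mul, (hI b hb).2, one_mul]
        have hA : ∀ b : Fin (n+1), uA c I t' b ≤ 0 := by
          intro b
          by_cases hb : b = 0
          · simp [hb, uA, expT, hc0]
          · unfold uA; rw [hexp b hb]; have := hc1_min b hb; linarith
        set S : Finset (Fin (n+1)) := Finset.univ.filter (fun b => uA c I t' b = 0) with hS
        have h0S : (0 : Fin (n+1)) ∈ S := by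
          simp only [hS, Finset.mem_filter, Finset.mem_univ, true_and]
          simp [uA, expT, hc0]
        have h1S : (1 : Fin (n+1)) ∈ S := by
          simp only [hS, Finset.mem_filter, Finset.mem_univ, true_and]
          unfold uA; rw [hexp 1 h1]; ring
        obtain ⟨a', ha'S, hmax⟩ := S.exists_max_image (uP r I t') ⟨0, h0S⟩
        have ha'0 : uA c I t' a' = 0 := by
          simpa [hS] using ha'S
        have heqa' : IsEquilibrium r c I t' a' := by
          constructor
          · intro b; rw [ha'0]; exact hA b
          · intro b hb
            apply hmax
            simp only [hS, Finset.mem_filter, Finset.mem_univ, true_and]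
            rw [hb, ha'0]
        have hle := hopt t' a' (fun _ => le_of_lt hc1pos) heqa'
        have h1le := hmax 1 h1S
        have hup1 : uP r I t' 1 = r 1 - c 1 := by
          unfold uP; rw [hexp 1 h1]
        rw [← hx]; rw [hup1] at h1le; linarith
    · rw [← hy]
      have := heq1 0
      have h0 : uA c I t 0 = 0 := by simp [uA, expT, hc0]
      linarith
  · rintro ⟨hx, hy⟩
    rw [max_le_iff] at hx
    obtain ⟨hx0, hxw⟩ := hx
    rcases hF with ⟨i, hi0, s, hs0, hxs, hys⟩ | ⟨hx', hy'⟩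
    · -- main two-signal construction
      have hcipos : 0 < c i := hc_pos i hi0
      have hsc : c i ≤ s := by rw [hys] at hy; linarith
      have hspos : 0 < s := lt_of_lt_of_le hcipos hsc
      set d : ℝ := c i - c 1 with hd
      have hd0 : 0 ≤ d := by have := hc1_min i hi0; simp [hd]; linarith
      have hc1pos : 0 < c 1 := hc_pos 1 h1
      have hds : d < s := by simp [hd]; linarith
      have hxw' : r 1 - c 1 ≤ r i - s := by rw [hxs] at hxw; exact hxw
      have hx0' : 0 ≤ r i - s := by rw [hxs] at hx0; exact hx0
      set p : ℝ := (s - d) / s with hp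
      set q : ℝ := d / s with hq
      have hp0 : 0 ≤ p := div_nonneg (by linarith) hspos.le
      have hq0 : 0 ≤ q := div_nonneg hd0 hspos.le
      have hpq : p + q = 1 := by
        rw [hp, hq, ← add_div]
        field_simp
        ring
      have hps : p * s = s - d := div_mul_cancel₀ _ hspos.ne'
      have hqs : q * s = d := div_mul_cancel₀ _ hspos.ne'
      have hd0case : d = 0 → s = c i := by
        intro hdz
        have hci1 : c i = c 1 := by simp [hd] at hdz; linarith
        have := hr1_max i hi0 hci1
        have : s ≤ c i := by linarith
        linarith
      set I : Fin (n+1) → Fin 2 → ℝ := fun a j =>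
        if a = i then (if j = 0 then 1 else 0) else (if j = 0 then p else q) with hI
      set t : Fin 2 → ℝ := fun j => if j = 0 then s else 0 with ht
      have hEi : ∀ t' : Fin 2 → ℝ, expT I t' i = t' 0 := by
        intro t'
        unfold expT
        rw [if_neg hi0, Fin.sum_univ_two]
        simp [hI]
      have hEo : ∀ (t' : Fin 2 → ℝ) (b : Fin (n+1)), b ≠ 0 → b ≠ i →
          expT I t' b = p * t' 0 + q * t' 1 := by
        intro t' b hb hbi
        unfold expT
        rw [if_neg hb, Fin.sum_univ_two]
        simp [hI, hbi]
      have hE1 : ∀ t' : Fin 2 → ℝ, expT I t' 1 = p * t' 0 + q * t' 1 := by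
        intro t'
        by_cases h1i : (1 : Fin (n+1)) = i
        · have hdz : d = 0 := by simp [hd, ← h1i]
          have hp1 : p = 1 := by rw [hp, hdz]; field_simp; ring
          have hq1 : q = 0 := by rw [hq, hdz]; simp
          rw [h1i, hEi, hp1, hq1]; ring
        · exact hEo t' 1 h1 h1i
      have hStoch : Stochastic I := by
        intro b hb
        constructor
        · intro j
          by_cases hbi : b = i <;> by_cases hj : j = 0 <;>
            simp [hI, hbi, hj, hp0, hq0]
        · rw [Fin.sum_univ_two]
          by_cases hbi : b = i <;> simp [hI, hbi, hpq]
      have htEi : expT I t i = s := by rw [hEi]; simp [ht]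
      have htEo : ∀ b : Fin (n+1), b ≠ 0 → b ≠ i → expT I t b = s - d := by
        intro b hb hbi
        rw [hEo t b hb hbi]
        simp [ht]
        exact hps
      have huAi : uA c I t i = s - c i := by unfold uA; rw [htEi]
      have huPi : uP r I t i = r i - s := by unfold uP; rw [htEi]
      have heqt : IsEquilibrium r c I t i := by
        constructor
        · intro b
          rw [huAi]
          by_cases hb : b = 0
          · simp [hb, uA, expT, hc0]; linarith
          · by_cases hbi : b = i
            · rw [hbi, huAi]
            · unfold uA; rw [htEo b hb hbi]
              have := hc1_min b hb
              simp [hd]; linarith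
        · intro b hb
          rw [huAi] at hb
          rw [huPi]
          by_cases hb0 : b = 0
          · simp [hb0, uP, expT, hr0]; linarith
          · by_cases hbi : b = i
            · rw [hbi, huPi]
            · unfold uA at hb; rw [htEo b hb0 hbi] at hb
              have hcb : c b = c 1 := by simp [hd] at hb ⊢; linarith
              have hrb := hr1_max b hb0 hcb
              unfold uP; rw [htEo b hb0 hbi]
              -- need r b - (s - d) ≤ r i - s, i.e. r b + d ≤ r i
              simp [hd]; linarith
      refine ⟨2, by norm_num, I, t, i, hStoch, ⟨?_, heqt, ?_⟩, by rw [huPi, hxs], by rw [huAi, hys]⟩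
      · intro j
        by_cases hj : j = 0 <;> simp [ht, hj] <;> linarith
      · intro t' a' ht'nn ⟨he1, he2⟩
        rw [huPi]
        by_cases ha0 : a' = 0
        · simp [ha0, uP, expT, hr0]; linarith
        · by_cases hai : a' = i
          · subst hai
            have hge : s ≤ t' 0 := by
              by_cases hdz : d = 0
              · have hsci := hd0case hdz
                have := he1 0
                rw [show uA c I t' 0 = 0 from by simp [uA, expT, hc0]] at this
                unfold uA at this
                rw [hEi] at this
                linarith
              · have hdpos : 0 < d := lt_of_le_of_ne hd0 (Ne.symm hdz)
                have := he1 1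
                unfold uA at this
                rw [hE1, hEi] at this
                have ht1 : 0 ≤ q * t' 1 := mul_nonneg hq0 (ht'nn 1)
                -- p * t'0 + q * t'1 - c 1 ≤ t'0 - c i
                -- so (1 - p) * t'0 ≥ d, i.e. q * t'0 ≥ d
                have hqt : d ≤ q * t' 0 := by nlinarith [hpq]
                -- q * t'0 = d * t'0 / s
                rw [hq] at hqt
                rw [div_mul_eq_mul_div, le_div_iff₀ hspos] at hqt
                nlinarith
            unfold uP; rw [hEi]; linarith
          · have hca : c a' = c 1 := by
              have := he1 1
              unfold uA at this
              rw [hE1, hEo t' a' ha0 hai] at this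
              have := hc1_min a' ha0
              linarith
            have hir : c 1 ≤ p * t' 0 + q * t' 1 := by
              have := he1 0
              rw [show uA c I t' 0 = 0 from by simp [uA, expT, hc0]] at this
              unfold uA at this
              rw [hEo t' a' ha0 hai] at this
              linarith
            have hrb := hr1_max a' ha0 hca
            unfold uP; rw [hEo t' a' ha0 hai]
            linarith
    · -- (0,0) one-signal construction
      subst hx'; subst hy'
      set I : Fin (n+1) → Fin 1 → ℝ := fun _ _ => 1 with hI
      set t : Fin 1 → ℝ := fun _ => 0 with ht
      have hE : ∀ (t' : Fin 1 → ℝ) (b : Fin (n+1)), b ≠ 0 → expT I t' b = t' 0 := by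
        intro t' b hb
        unfold expT
        rw [if_neg hb, Fin.sum_univ_one]
        simp [hI]
      have hStoch : Stochastic I := by
        intro b hb
        constructor
        · intro j; simp [hI]
        · simp [hI]
      have heqt : IsEquilibrium r c I t 0 := by
        constructor
        · intro b
          by_cases hb : b = 0
          · simp [hb]
          · unfold uA; rw [hE t b hb]
            simp [ht, expT, hc0]
            have := hc_pos b hb; linarith
        · intro b hb
          by_cases hb0 : b = 0
          · simp [hb0]
          · unfold uA at hb; rw [hE t b hb0] at hb
            simp [ht, expT, hc0] at hb
            have := hc_pos b hb0; linarith
      have huP0 : uP r I t 0 = 0 := by simp [uP, expT, hr0]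
      have huA0 : uA c I t 0 = 0 := by simp [uA, expT, hc0]
      refine ⟨1, by norm_num, I, t, 0, hStoch, ⟨fun j => by simp [ht], heqt, ?_⟩, huP0, huA0⟩
      intro t' a' ht'nn ⟨he1, he2⟩
      rw [huP0]
      by_cases ha0 : a' = 0
      · simp [ha0, uP, expT, hr0]
      · have hca : c a' = c 1 := by
          have := he1 1
          unfold uA at this
          rw [hE t' 1 h1, hE t' a' ha0] at this
          have := hc1_min a' ha0
          linarith
        have hir : c 1 ≤ t' 0 := by
          have := he1 0
          rw [show uA c I t' 0 = 0 from by simp [uA, expT, hc0]] at this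
          unfold uA at this
          rw [hE t' a' ha0] at this
          linarith
        have hrb := hr1_max a' ha0 hca
        unfold uP; rw [hE t' a' ha0]
        linarith
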